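/- The delegative Shapley-Shubik index satisfies monotonicity with respect to direct delegations: given two elections E and E' differing only in that voter j (not on the delegation chain from i to i's guru in E) delegates directly to i in E', we have DS_i(E') ≥ DS_i(E). -/
import Mathlib


open Finset
open scoped Classical

/-- Total weight of voters in `C` whose entire delegation chain (the iterates of `d`)
stays inside `C` (the "active" voters). -/
noncomputable def gamma {V : Type*} [Fintype V] (w : V → ℕ) (d : V → V) (C : Finset V) : ℕ :=
  ∑ i ∈ C, if ∀ k : ℕ, d^[k] i ∈ C then w i else 0

/-- A coalition wins iff its active weight meets the quota. -/
def wins {V : Type*} [Fintype V] (w : V → ℕ) (d : V → V) (q : ℕ) (C : Finset V) : Prop :=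
  q ≤ gamma w d C

/-- Voter `i` is a swing agent for coalition `C`. -/
noncomputable def swing {V : Type*} [Fintype V] (w : V → ℕ) (d : V → V) (q : ℕ)
    (i : V) (C : Finset V) : Prop :=
  ¬ wins w d q C ∧ wins w d q (insert i C)

/-- Number of coalitions `C ⊆ V \ {i}` for which `i` is a swing agent. -/
noncomputable def swingCount {V : Type*} [Fintype V] (w : V → ℕ) (d : V → V) (q : ℕ)
    (i : V) : ℕ :=
  (((univ : Finset V).erase i).powerset.filter (fun C => swing w d q i C)).card

/-- Delegative Banzhaf measure. -/
noncomputable def DB {V : Type*} [Fintype V] (w : V → ℕ) (d : V → V) (q : ℕ) (i : V) : ℚ :=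
  (swingCount w d q i : ℚ) / 2 ^ (Fintype.card V - 1)

/-- Delegative Shapley-Shubik index. -/
noncomputable def DS {V : Type*} [Fintype V] (w : V → ℕ) (d : V → V) (q : ℕ) (i : V) : ℚ :=
  ∑ C ∈ ((univ : Finset V).erase i).powerset,
    if swing w d q i C then
      (Nat.factorial C.card * Nat.factorial (Fintype.card V - C.card - 1) : ℚ) /
        Nat.factorial (Fintype.card V)
    else 0

lemma iter_congr {V : Type*} (d d' : V → V) (j : V)
    (hsame : ∀ l, l ≠ j → d' l = d l) (v : V) (h : ∀ k, d'^[k] v ≠ j) :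
    ∀ k, d'^[k] v = d^[k] v := by
  intro k
  induction k with
  | zero => rfl
  | succ k ih =>
    rw [Function.iterate_succ_apply', Function.iterate_succ_apply',
      hsame _ (h k), ih]

lemma swing_imp {V : Type*} [Fintype V] (w : V → ℕ) (q : ℕ) (d d' : V → V) (i j : V)
    (hnotchain : ∀ k, d^[k] i ≠ j)
    (hdj : d' j = i)
    (hsame : ∀ l, l ≠ j → d' l = d l)
    (C : Finset V) (hiC : i ∉ C) (hs : swing w d q i C) : swing w d' q i C := by
  -- Step 1: gamma w d' C ≤ gamma w d C
  have h1 : gamma w d' C ≤ gamma w d C := by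
    apply Finset.sum_le_sum
    intro v hv
    split_ifs with h' h'' h''
    · exact le_rfl
    · exfalso
      apply h''
      have hnj : ∀ k, d'^[k] v ≠ j := by
        intro k hk
        apply hiC
        have := h' (k + 1)
        rwa [Function.iterate_succ_apply', hk, hdj] at this
      intro k
      rw [← iter_congr d d' j hsame v hnj k]
      exact h' k
    · exact Nat.zero_le _
    · exact le_rfl
  -- Step 2: i's chain stays in insert i C
  have hi : ∀ k, d^[k] i ∈ insert i C := by
    by_contra hcon
    push_neg at hcon
    obtain ⟨k₀, hk₀⟩ := hcon
    have heq : gamma w d (insert i C) = gamma w d C := by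
      unfold gamma
      rw [Finset.sum_insert hiC]
      have hizero : (if ∀ k : ℕ, d^[k] i ∈ insert i C then w i else 0) = 0 := by
        rw [if_neg]; intro h; exact hk₀ (h k₀)
      rw [hizero, zero_add]
      apply Finset.sum_congr rfl
      intro v hv
      congr 1
      apply propext
      constructor
      · intro h k
        have hni : d^[k] v ≠ i := by
          intro hik
          apply hk₀
          have := h (k + k₀)
          rwa [Nat.add_comm, Function.iterate_add_apply, hik] at this
        rcases Finset.mem_insert.mp (h k) with h' | h'
        · exact absurd h' hni
        · exact h'
      · intro h k
        exact Finset.mem_insert_of_mem (h k)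
    exact hs.1 (by rw [wins, ← heq]; exact hs.2)
  -- Step 3: gamma w d (insert i C) ≤ gamma w d' (insert i C)
  have h3 : gamma w d (insert i C) ≤ gamma w d' (insert i C) := by
    apply Finset.sum_le_sum
    intro v hv
    split_ifs with h' h'' h''
    · exact le_rfl
    · exfalso
      apply h''
      have key : ∀ k, d'^[k] v = d^[k] v ∨ ∃ m, d'^[k] v = d^[m] i := by
        intro k
        induction k with
        | zero => left; rfl
        | succ k ih =>
          rw [Function.iterate_succ_apply']
          rcases ih with h | ⟨m, h⟩
          · by_cases hj : d^[k] v = j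
            · right; exact ⟨0, by rw [h, hj, hdj]; rfl⟩
            · left
              rw [h, hsame _ hj]
              exact (Function.iterate_succ_apply' d k v).symm
          · right
            refine ⟨m + 1, ?_⟩
            rw [h, hsame _ (hnotchain m)]
            exact (Function.iterate_succ_apply' d m i).symm
      intro k
      rcases key k with h | ⟨m, h⟩
      · rw [h]; exact h' k
      · rw [h]; exact hi m
    · exact Nat.zero_le _
    · exact le_rfl
  exact ⟨fun hw => hs.1 (le_trans hw h1), le_trans hs.2 h3⟩

/-- Monotonicity w.r.t. direct delegations (MDD) for the delegative
Shapley-Shubik index: if E' differs from E only in that voter j (not on i's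
delegation chain in E) delegates directly to i, then DS_i(E') ≥ DS_i(E). -/
theorem stmt3 {V : Type*} [Fintype V] (w : V → ℕ) (q : ℕ) (d d' : V → V) (i j : V)
    (hacyc : ∀ v, ∃ k, d (d^[k] v) = d^[k] v)
    (hacyc' : ∀ v, ∃ k, d' (d'^[k] v) = d'^[k] v)
    (hnotchain : ∀ k, d^[k] i ≠ j)
    (hdj : d' j = i)
    (hsame : ∀ l, l ≠ j → d' l = d l) :
    DS w d q i ≤ DS w d' q i := by
  unfold DS
  apply Finset.sum_le_sum
  intro C hC
  have hiC : i ∉ C := by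
    intro h
    have := Finset.mem_powerset.mp hC h
    exact (Finset.mem_erase.mp this).1 rfl
  by_cases hs : swing w d q i C
  · rw [if_pos hs, if_pos (swing_imp w q d d' i j hnotchain hdj hsame C hiC hs)]
  · rw [if_neg hs]
    split_ifs with h
    · positivity
    · exact le_rfl
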